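/- Assume Ω_T is positive definite and let J̌ > 0. Let w₁ ∈ ℝ^L satisfy the information constraint J(w₁) ≥ J̌ and minimize the energy cost subject to the information constraint, i.e. P(w₁) ≤ P(w) for every w ∈ ℝ^L with J(w) ≥ J̌. Then w₁ solves the energy constrained problem with budget P̂ = P(w₁): for every w ∈ ℝ^L with P(w) ≤ P(w₁) one has J(w) ≤ J(w₁). (Second direction of Proposition 2.) -/

import Mathlib

open Matrix BigOperators

/-- second direction of Proposition 2: a minimizer of the energy
cost subject to the information constraint solves the energy constrained
problem with budget `P w₁`. -/
theorem information_constrained_solves_energy_constrained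
    {L : ℕ} (hL : 0 < L)
    (ΩJN ΩJD ΩT : Matrix (Fin L) (Fin L) ℝ)
    (hJN : ΩJN.PosSemidef) (hJD : ΩJD.PosSemidef) (hT : ΩT.PosDef)
    (ξsq : ℝ) (hξ : 0 < ξsq)
    (c : Fin L → ℝ) (hc : ∀ l, 0 ≤ c l)
    (Jcheck : ℝ) (hJcheck : 0 < Jcheck)
    (J P : (Fin L → ℝ) → ℝ)
    (hJ : ∀ w, J w = (w ⬝ᵥ ΩJN.mulVec w) / (w ⬝ᵥ ΩJD.mulVec w + ξsq))
    (hP : ∀ w, P w = w ⬝ᵥ ΩT.mulVec w + ∑ l, if w l = 0 then 0 else c l)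
    (w₁ : Fin L → ℝ)
    (hfeas : Jcheck ≤ J w₁)
    (hopt : ∀ w, Jcheck ≤ J w → P w₁ ≤ P w) :
    ∀ w, P w ≤ P w₁ → J w ≤ J w₁ := by
  intro w hPw
  by_contra hlt
  push_neg at hlt
  have hJw₁pos : 0 < J w₁ := lt_of_lt_of_le hJcheck hfeas
  have hw0 : w ≠ 0 := by
    intro h
    subst h
    have hJ0 : J 0 = 0 := by rw [hJ]; simp
    rw [hJ0] at hlt
    linarith
  set N := w ⬝ᵥ ΩJN.mulVec w with hN
  set D := w ⬝ᵥ ΩJD.mulVec w with hD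
  set Q := w ⬝ᵥ ΩT.mulVec w with hQ
  have hDnn : 0 ≤ D := by
    have := hJD.dotProduct_mulVec_nonneg w
    simpa using this
  have hQpos : 0 < Q := by
    have := hT.dotProduct_mulVec_pos hw0
    simpa using this
  have hden : 0 < D + ξsq := by linarith
  have hJcw : Jcheck < J w := lt_of_le_of_lt hfeas hlt
  have hNineq : Jcheck * (D + ξsq) < N := by
    rw [hJ w] at hJcw
    exact (lt_div_iff₀ hden).mp hJcw
  set A := N - Jcheck * D with hA
  set B := Jcheck * ξsq with hB
  have hBpos : 0 < B := mul_pos hJcheck hξ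
  have hBA : B < A := by
    simp only [hA, hB]
    nlinarith
  have hApos : 0 < A := lt_trans hBpos hBA
  set t := Real.sqrt (B / A) with ht
  have htpos : 0 < t := Real.sqrt_pos.mpr (div_pos hBpos hApos)
  have ht2 : t ^ 2 = B / A := Real.sq_sqrt (le_of_lt (div_pos hBpos hApos))
  have ht1 : t < 1 := by
    have : B / A < 1 := (div_lt_one hApos).mpr hBA
    nlinarith [Real.sq_sqrt (le_of_lt (div_pos hBpos hApos)), Real.sqrt_nonneg (B / A)]
  set w' := t • w with hw'
  have hquad : ∀ M : Matrix (Fin L) (Fin L) ℝ,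
      w' ⬝ᵥ M.mulVec w' = t ^ 2 * (w ⬝ᵥ M.mulVec w) := by
    intro M
    rw [hw', Matrix.mulVec_smul, smul_dotProduct, dotProduct_smul]
    simp [smul_smul]
    ring
  have ht2A : t ^ 2 * A = B := by
    rw [ht2]
    field_simp
  have hden' : 0 < t ^ 2 * D + ξsq := by nlinarith [sq_nonneg t]
  have hJw' : J w' = Jcheck := by
    rw [hJ w', hquad ΩJN, hquad ΩJD]
    rw [div_eq_iff (ne_of_gt hden')]
    simp only [hA, hB] at ht2A
    ring_nf
    ring_nf at ht2A
    linarith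
  have hPw' : P w' < P w := by
    rw [hP w', hP w, hquad ΩT]
    have hcards : (∑ l, if w' l = 0 then 0 else c l) = ∑ l, if w l = 0 then 0 else c l := by
      apply Finset.sum_congr rfl
      intro l _
      have : w' l = 0 ↔ w l = 0 := by
        simp [hw', Pi.smul_apply, smul_eq_mul, mul_eq_zero, ne_of_gt htpos]
      simp [this]
    rw [hcards]
    have : t ^ 2 * Q < Q := by nlinarith
    linarith
  have := hopt w' (le_of_eq hJw'.symm)
  linarith
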